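/- Define H₂(t) = √(3(3-t)/(1-t)) - ((3-2t)/2)·arccos(t/(3-2t)) for t ∈ [0,1). Then H₂(0) = 3 - 3π/4 > 0, H₂'(0) = (3+π)/2 > 0, and H₂''(t) = (√3/2)·(7 + 3/(1-t))·1/((3-2t)(1-t)^{3/2}√(3-t)) > 0 for all t ∈ [0,1). Consequently all Taylor coefficients of H₂ about t = 0 are nonnegative. -/

import Mathlib

open Real Set Filter

noncomputable section

/-- H₂(t) = √(3(3-t)/(1-t)) - ((3-2t)/2)·arccos(t/(3-2t)). -/
def H₂ (t : ℝ) : ℝ :=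
  Real.sqrt (3 * (3 - t) / (1 - t)) - (3 - 2 * t) / 2 * arccos (t / (3 - 2 * t))

/-- First derivative of H₂ on (-∞,1). -/
def D1 (t : ℝ) : ℝ :=
  Real.sqrt 3 / (Real.sqrt (1 - t) ^ 3 * Real.sqrt (3 - t)) + arccos (t / (3 - 2 * t)) +
    Real.sqrt 3 / (2 * Real.sqrt (1 - t) * Real.sqrt (3 - t))

/-- Second derivative of H₂, written as a product of absolutely monotone atoms. -/
def Gf (t : ℝ) : ℝ :=
  (Real.sqrt 3 / 4) *
    ((7 + 3 * (1 - t) ^ (-(1 : ℝ))) *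
      ((3 / 2 - t) ^ (-(1 : ℝ)) * ((1 - t) ^ (-(3 / 2 : ℝ)) * (3 - t) ^ (-(1 / 2 : ℝ)))))

lemma rpow_32_eq {t : ℝ} (ht : t < 1) : (1 - t) ^ ((3 : ℝ) / 2) = Real.sqrt (1 - t) ^ 3 := by
  have h1 : (0 : ℝ) ≤ 1 - t := by linarith
  rw [Real.sqrt_eq_rpow, ← Real.rpow_natCast ((1 - t) ^ ((1 : ℝ) / 2)) 3, ← Real.rpow_mul h1]
  norm_num

lemma Gf_eq {t : ℝ} (ht : t < 1) :
    Gf t = Real.sqrt 3 / 2 * (7 + 3 / (1 - t)) *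
      (1 / ((3 - 2 * t) * (1 - t) ^ ((3 : ℝ) / 2) * Real.sqrt (3 - t))) := by
  have h1 : (0 : ℝ) < 1 - t := by linarith
  have h3 : (0 : ℝ) < 3 - t := by linarith
  have h32 : (0 : ℝ) < 3 / 2 - t := by linarith
  have e1 : (1 - t) ^ (-(1 : ℝ)) = (1 - t)⁻¹ := by
    rw [Real.rpow_neg h1.le, Real.rpow_one]
  have e2 : (3 / 2 - t) ^ (-(1 : ℝ)) = (3 / 2 - t)⁻¹ := by
    rw [Real.rpow_neg h32.le, Real.rpow_one]
  have e3 : (1 - t) ^ (-(3 / 2 : ℝ)) = ((1 - t) ^ ((3 : ℝ) / 2))⁻¹ := by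
    rw [show (-(3 / 2 : ℝ)) = -((3 : ℝ) / 2) by norm_num, Real.rpow_neg h1.le]
  have e4 : (3 - t) ^ (-(1 / 2 : ℝ)) = (Real.sqrt (3 - t))⁻¹ := by
    rw [Real.sqrt_eq_rpow, ← Real.rpow_neg h3.le]
  have hp32 : (0 : ℝ) < (1 - t) ^ ((3 : ℝ) / 2) := Real.rpow_pos_of_pos h1 _
  have hs3 : (0 : ℝ) < Real.sqrt (3 - t) := Real.sqrt_pos.2 h3
  unfold Gf
  rw [e1, e2, e3, e4]
  have h32' : (0 : ℝ) < 3 - 2 * t := by linarith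
  field_simp
  ring

lemma hasDeriv_H₂ {t : ℝ} (ht : t < 1) : HasDerivAt H₂ (D1 t) t := by
  have h1 : (0 : ℝ) < 1 - t := by linarith
  have h3 : (0 : ℝ) < 3 - t := by linarith
  have h32 : (0 : ℝ) < 3 - 2 * t := by linarith
  set s1 := Real.sqrt (1 - t) with hs1def
  set s3 := Real.sqrt (3 - t) with hs3def
  have hs1 : 0 < s1 := Real.sqrt_pos.2 h1
  have hs3 : 0 < s3 := Real.sqrt_pos.2 h3
  have hs1sq : s1 ^ 2 = 1 - t := Real.sq_sqrt h1.le
  have hs3sq : s3 ^ 2 = 3 - t := Real.sq_sqrt h3.le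
  have hr3 : Real.sqrt 3 ^ 2 = 3 := Real.sq_sqrt (by norm_num)
  have hr3pos : (0 : ℝ) < Real.sqrt 3 := Real.sqrt_pos.2 (by norm_num)
  -- term 1
  have hinner : HasDerivAt (fun x : ℝ => 3 * (3 - x) / (1 - x)) (6 / (1 - t) ^ 2) t := by
    have hnum : HasDerivAt (fun x : ℝ => 3 * (3 - x)) (-3) t := by
      simpa using ((hasDerivAt_id t).const_sub 3).const_mul 3
    have hden : HasDerivAt (fun x : ℝ => 1 - x) (-1) t := (hasDerivAt_id t).const_sub 1
    have := hnum.div hden h1.ne'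
    refine this.congr_deriv ?_
    field_simp
    ring
  have hval : Real.sqrt (3 * (3 - t) / (1 - t)) = Real.sqrt 3 * s3 / s1 := by
    rw [Real.sqrt_div (by positivity), Real.sqrt_mul (by norm_num)]
  have hT1 : HasDerivAt (fun x : ℝ => Real.sqrt (3 * (3 - x) / (1 - x)))
      (Real.sqrt 3 / (s1 ^ 3 * s3)) t := by
    have hne : 3 * (3 - t) / (1 - t) ≠ 0 := by positivity
    have := hinner.sqrt hne
    refine this.congr_deriv ?_
    rw [hval]
    field_simp
    linear_combination (-2 * (1 - t) ^ 2) * hr3 + (6 * (s1 ^ 2 + (1 - t))) * hs1sq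
  -- arccos term
  have hu : HasDerivAt (fun x : ℝ => x / (3 - 2 * x)) (3 / (3 - 2 * t) ^ 2) t := by
    have hden : HasDerivAt (fun x : ℝ => 3 - 2 * x) (-2) t := by
      simpa using ((hasDerivAt_id t).const_mul 2).const_sub 3
    have := (hasDerivAt_id t).div hden h32.ne'
    refine this.congr_deriv ?_
    field_simp
    simp only [id]; ring
  have hult : t / (3 - 2 * t) < 1 := (div_lt_one h32).2 (by linarith)
  have hugt : (-1 : ℝ) < t / (3 - 2 * t) := by
    rw [lt_div_iff₀ h32]; linarith
  have hsq : Real.sqrt (1 - (t / (3 - 2 * t)) ^ 2) = Real.sqrt 3 * s1 * s3 / (3 - 2 * t) := by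
    have key : 1 - (t / (3 - 2 * t)) ^ 2 = (Real.sqrt 3 * s1 * s3 / (3 - 2 * t)) ^ 2 := by
      field_simp [show (3:ℝ) - t * 2 ≠ 0 by linarith]
      linear_combination (-(s1 ^ 2 * s3 ^ 2)) * hr3 + (-3 * s3 ^ 2) * hs1sq +
        (-3 * (1 - t)) * hs3sq
    rw [key, Real.sqrt_sq (by positivity)]
  have harc : HasDerivAt (fun x : ℝ => arccos (x / (3 - 2 * x)))
      (-(Real.sqrt 3 / ((3 - 2 * t) * s1 * s3))) t := by
    have := (Real.hasDerivAt_arccos hugt.ne' hult.ne).comp t hu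
    refine this.congr_deriv ?_
    rw [hsq]
    field_simp
    linear_combination hr3
  have hc : HasDerivAt (fun x : ℝ => (3 - 2 * x) / 2) (-1) t := by
    have : HasDerivAt (fun x : ℝ => 3 - 2 * x) (-2) t := by
      simpa using ((hasDerivAt_id t).const_mul 2).const_sub 3
    refine (this.div_const 2).congr_deriv ?_
    norm_num
  have hT2 : HasDerivAt (fun x : ℝ => (3 - 2 * x) / 2 * arccos (x / (3 - 2 * x)))
      ((-1) * arccos (t / (3 - 2 * t)) +
        (3 - 2 * t) / 2 * (-(Real.sqrt 3 / ((3 - 2 * t) * s1 * s3)))) t := hc.mul harc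
  have hsum := hT1.sub hT2
  have hH : H₂ = fun x : ℝ =>
      Real.sqrt (3 * (3 - x) / (1 - x)) - (3 - 2 * x) / 2 * arccos (x / (3 - 2 * x)) := rfl
  rw [hH]
  refine hsum.congr_deriv ?_
  unfold D1
  rw [← hs1def, ← hs3def]
  field_simp [show (3:ℝ) - t * 2 ≠ 0 by linarith]
  ring

lemma hasDeriv_D1 {t : ℝ} (ht : t < 1) : HasDerivAt D1 (Gf t) t := by
  have h1 : (0 : ℝ) < 1 - t := by linarith
  have h3 : (0 : ℝ) < 3 - t := by linarith
  have h32 : (0 : ℝ) < 3 - 2 * t := by linarith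
  set s1 := Real.sqrt (1 - t) with hs1def
  set s3 := Real.sqrt (3 - t) with hs3def
  have hs1 : 0 < s1 := Real.sqrt_pos.2 h1
  have hs3 : 0 < s3 := Real.sqrt_pos.2 h3
  have hs1sq : s1 ^ 2 = 1 - t := Real.sq_sqrt h1.le
  have hs3sq : s3 ^ 2 = 3 - t := Real.sq_sqrt h3.le
  have hr3 : Real.sqrt 3 ^ 2 = 3 := Real.sq_sqrt (by norm_num)
  have hr3pos : (0 : ℝ) < Real.sqrt 3 := Real.sqrt_pos.2 (by norm_num)
  have hds1 : HasDerivAt (fun x : ℝ => Real.sqrt (1 - x)) (-1 / (2 * s1)) t := by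
    have := ((hasDerivAt_id t).const_sub 1).sqrt h1.ne'
    exact this
  have hds3 : HasDerivAt (fun x : ℝ => Real.sqrt (3 - x)) (-1 / (2 * s3)) t := by
    have := ((hasDerivAt_id t).const_sub 3).sqrt h3.ne'
    exact this
  -- term 1 : √3 / (s1^3 * s3)
  have hden1 : HasDerivAt (fun x : ℝ => Real.sqrt (1 - x) ^ 3 * Real.sqrt (3 - x))
      ((3 : ℕ) * s1 ^ 2 * (-1 / (2 * s1)) * s3 + s1 ^ 3 * (-1 / (2 * s3))) t := by
    have := (hds1.pow 3).mul hds3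
    exact this
  have hT1 : HasDerivAt (fun x : ℝ => Real.sqrt 3 / (Real.sqrt (1 - x) ^ 3 * Real.sqrt (3 - x)))
      ((0 * (s1 ^ 3 * s3) - Real.sqrt 3 *
        ((3 : ℕ) * s1 ^ 2 * (-1 / (2 * s1)) * s3 + s1 ^ 3 * (-1 / (2 * s3)))) / (s1 ^ 3 * s3) ^ 2) t :=
    (hasDerivAt_const t (Real.sqrt 3)).div hden1 (by positivity)
  -- arccos term
  have hu : HasDerivAt (fun x : ℝ => x / (3 - 2 * x)) (3 / (3 - 2 * t) ^ 2) t := by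
    have hden : HasDerivAt (fun x : ℝ => 3 - 2 * x) (-2) t := by
      simpa using ((hasDerivAt_id t).const_mul 2).const_sub 3
    have := (hasDerivAt_id t).div hden h32.ne'
    refine this.congr_deriv ?_
    field_simp
    simp only [id]; ring
  have hult : t / (3 - 2 * t) < 1 := (div_lt_one h32).2 (by linarith)
  have hugt : (-1 : ℝ) < t / (3 - 2 * t) := by
    rw [lt_div_iff₀ h32]; linarith
  have hsq : Real.sqrt (1 - (t / (3 - 2 * t)) ^ 2) = Real.sqrt 3 * s1 * s3 / (3 - 2 * t) := by
    have key : 1 - (t / (3 - 2 * t)) ^ 2 = (Real.sqrt 3 * s1 * s3 / (3 - 2 * t)) ^ 2 := by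
      field_simp [show (3:ℝ) - t * 2 ≠ 0 by linarith]
      linear_combination (-(s1 ^ 2 * s3 ^ 2)) * hr3 + (-3 * s3 ^ 2) * hs1sq +
        (-3 * (1 - t)) * hs3sq
    rw [key, Real.sqrt_sq (by positivity)]
  have harc : HasDerivAt (fun x : ℝ => arccos (x / (3 - 2 * x)))
      (-(Real.sqrt 3 / ((3 - 2 * t) * s1 * s3))) t := by
    have := (Real.hasDerivAt_arccos hugt.ne' hult.ne).comp t hu
    refine this.congr_deriv ?_
    rw [hsq]
    field_simp
    linear_combination hr3
  -- term 3 : √3 / (2 * s1 * s3)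
  have hden3 : HasDerivAt (fun x : ℝ => 2 * Real.sqrt (1 - x) * Real.sqrt (3 - x))
      (2 * (-1 / (2 * s1)) * s3 + 2 * s1 * (-1 / (2 * s3))) t := by
    have := (hds1.const_mul 2).mul hds3
    exact this
  have hT3 : HasDerivAt (fun x : ℝ => Real.sqrt 3 / (2 * Real.sqrt (1 - x) * Real.sqrt (3 - x)))
      ((0 * (2 * s1 * s3) - Real.sqrt 3 *
        (2 * (-1 / (2 * s1)) * s3 + 2 * s1 * (-1 / (2 * s3)))) / (2 * s1 * s3) ^ 2) t :=
    (hasDerivAt_const t (Real.sqrt 3)).div hden3 (by positivity)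
  have hsum := (hT1.add harc).add hT3
  have hD : D1 = fun x : ℝ =>
      Real.sqrt 3 / (Real.sqrt (1 - x) ^ 3 * Real.sqrt (3 - x)) + arccos (x / (3 - 2 * x)) +
        Real.sqrt 3 / (2 * Real.sqrt (1 - x) * Real.sqrt (3 - x)) := rfl
  rw [hD]
  refine hsum.congr_deriv ?_
  rw [Gf_eq ht, rpow_32_eq ht, ← hs1def, ← hs3def]
  field_simp
  linear_combination
    ((-21:ℝ) * (s3)^2 * (Real.sqrt 3) + (17:ℝ) * (s3)^2 * (Real.sqrt 3) * (t) + (-2:ℝ) * (s3)^2 * (Real.sqrt 3) * (t)^2 + (9:ℝ) * (Real.sqrt 3) + (-18:ℝ) * (Real.sqrt 3) * (t) + (11:ℝ) * (Real.sqrt 3) * (t)^2 + (-4:ℝ) * (s1)^2 * (s3)^2 * (Real.sqrt 3) + (4:ℝ) * (s1)^2 * (s3)^2 * (Real.sqrt 3) * (t) + (3:ℝ) * (s1)^2 * (Real.sqrt 3) + (-5:ℝ) * (s1)^2 * (Real.sqrt 3) * (t) + (2:ℝ) * (s1)^2 * (Real.sqrt 3) * (t)^2 + (-2:ℝ) * (Real.sqrt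 3) * (t)^3) * hs1sq +
    ((-3:ℝ) * (Real.sqrt 3) + (8:ℝ) * (Real.sqrt 3) * (t) + (-7:ℝ) * (Real.sqrt 3) * (t)^2 + (2:ℝ) * (Real.sqrt 3) * (t)^3) * hs3sq

lemma itDW (n : ℕ) (f : ℝ → ℝ) {x : ℝ} (hx : x ∈ Iio (1 : ℝ)) :
    iteratedDerivWithin n f (Iio 1) x = iteratedDeriv n f x := by
  simp only [iteratedDerivWithin, iteratedDeriv,
    iteratedFDerivWithin_of_isOpen n isOpen_Iio hx]

/-- absolutely monotone on (-∞,1) -/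
def AM (f : ℝ → ℝ) : Prop :=
  ContDiffOn ℝ (⊤ : ℕ∞) f (Iio 1) ∧
    ∀ n : ℕ, ∀ x ∈ Iio (1 : ℝ), 0 ≤ iteratedDerivWithin n f (Iio 1) x

lemma uD : UniqueDiffOn ℝ (Iio (1 : ℝ)) := isOpen_Iio.uniqueDiffOn

lemma iteratedDeriv_zero_fun (n : ℕ) : iteratedDeriv n (fun _ : ℝ => (0 : ℝ)) = fun _ => 0 := by
  induction n with
  | zero => simp
  | succ n IH =>
    rw [iteratedDeriv_succ']
    have : deriv (fun _ : ℝ => (0 : ℝ)) = fun _ => (0 : ℝ) := by funext y; simp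
    rw [this, IH]

lemma AM_const {c : ℝ} (hc : 0 ≤ c) : AM (fun _ => c) := by
  refine ⟨contDiffOn_const, fun n x hx => ?_⟩
  rw [itDW n _ hx]
  cases n with
  | zero => simpa using hc
  | succ n =>
    rw [iteratedDeriv_succ']
    have : deriv (fun _ : ℝ => c) = fun _ => (0 : ℝ) := by funext y; simp
    rw [this, iteratedDeriv_zero_fun]

lemma AM_add {f g : ℝ → ℝ} (hf : AM f) (hg : AM g) : AM (fun x => f x + g x) := by
  refine ⟨hf.1.add hg.1, fun n x hx => ?_⟩
  have : iteratedDerivWithin n (fun x => f x + g x) (Iio 1) x =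
      iteratedDerivWithin n f (Iio 1) x + iteratedDerivWithin n g (Iio 1) x :=
    iteratedDerivWithin_add hx uD (hf.1.of_le (mod_cast le_top) x hx) (hg.1.of_le (mod_cast le_top) x hx)
  rw [this]
  exact add_nonneg (hf.2 n x hx) (hg.2 n x hx)

lemma AM_deriv {f : ℝ → ℝ} (hf : AM f) : AM (derivWithin f (Iio 1)) := by
  refine ⟨hf.1.derivWithin uD (by norm_num), fun n x hx => ?_⟩
  have : iteratedDerivWithin n (derivWithin f (Iio 1)) (Iio 1) x =
      iteratedDerivWithin (n + 1) f (Iio 1) x := (congrFun iteratedDerivWithin_succ' x).symm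
  rw [this]
  exact hf.2 (n + 1) x hx

lemma AM_mul_aux (n : ℕ) : ∀ f g : ℝ → ℝ, AM f → AM g → ∀ x ∈ Iio (1 : ℝ),
    0 ≤ iteratedDerivWithin n (fun y => f y * g y) (Iio 1) x := by
  induction n with
  | zero =>
    intro f g hf hg x hx
    rw [iteratedDerivWithin_zero]
    have h0f := hf.2 0 x hx
    have h0g := hg.2 0 x hx
    rw [iteratedDerivWithin_zero] at h0f h0g
    exact mul_nonneg h0f h0g
  | succ n IH =>
    intro f g hf hg x hx
    rw [iteratedDerivWithin_succ']
    have heq : Set.EqOn (derivWithin (fun y => f y * g y) (Iio 1))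
        (fun y => derivWithin f (Iio 1) y * g y + f y * derivWithin g (Iio 1) y) (Iio 1) := by
      intro y hy
      exact derivWithin_mul
        ((hf.1.differentiableOn (by norm_num)) y hy)
        ((hg.1.differentiableOn (by norm_num)) y hy)
    rw [iteratedDerivWithin_congr heq hx]
    have hcd1 : ContDiffOn ℝ (n : ℕ∞) (fun y => derivWithin f (Iio 1) y * g y) (Iio 1) :=
      (((AM_deriv hf).1).of_le (mod_cast le_top)).mul ((hg.1).of_le (mod_cast le_top))
    have hcd2 : ContDiffOn ℝ (n : ℕ∞) (fun y => f y * derivWithin g (Iio 1) y) (Iio 1) :=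
      ((hf.1).of_le (mod_cast le_top)).mul (((AM_deriv hg).1).of_le (mod_cast le_top))
    have hadd : iteratedDerivWithin n
        (fun y => derivWithin f (Iio 1) y * g y + f y * derivWithin g (Iio 1) y) (Iio 1) x =
        iteratedDerivWithin n (fun y => derivWithin f (Iio 1) y * g y) (Iio 1) x +
        iteratedDerivWithin n (fun y => f y * derivWithin g (Iio 1) y) (Iio 1) x :=
      iteratedDerivWithin_add hx uD (hcd1 x hx) (hcd2 x hx)
    rw [hadd]
    exact add_nonneg (IH _ _ (AM_deriv hf) hg x hx) (IH _ _ hf (AM_deriv hg) x hx)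

lemma AM_mul {f g : ℝ → ℝ} (hf : AM f) (hg : AM g) : AM (fun x => f x * g x) :=
  ⟨hf.1.mul hg.1, fun n x hx => AM_mul_aux n f g hf hg x hx⟩

lemma atom_hasDeriv (a p : ℝ) {x : ℝ} (hx : x < a) :
    HasDerivAt (fun t => (a - t) ^ (-p)) (p * (a - x) ^ (-(p + 1))) x := by
  have h : (0 : ℝ) < a - x := by linarith
  have hbase : HasDerivAt (fun t : ℝ => a - t) (-1) x := (hasDerivAt_id x).const_sub a
  have := (Real.hasDerivAt_rpow_const (x := a - x) (p := -p) (Or.inl h.ne')).comp x hbase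
  refine this.congr_deriv ?_
  rw [show -p - 1 = -(p+1) by ring]
  ring

lemma atom_iter (a p : ℝ) (ha : 1 ≤ a) (n : ℕ) :
    Set.EqOn (iteratedDeriv n (fun t => (a - t) ^ (-p)))
      (fun x => (∏ i ∈ Finset.range n, (p + i)) * (a - x) ^ (-(p + n))) (Iio 1) := by
  induction n with
  | zero =>
    intro x _
    simp
  | succ n IH =>
    intro x hx
    have hxa : x < a := lt_of_lt_of_le hx ha
    rw [iteratedDeriv_succ]
    have hev : iteratedDeriv n (fun t => (a - t) ^ (-p)) =ᶠ[nhds x]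
        (fun y => (∏ i ∈ Finset.range n, (p + i)) * (a - y) ^ (-(p + n))) :=
      Filter.eventuallyEq_of_mem (isOpen_Iio.mem_nhds hx) IH
    rw [hev.deriv_eq]
    have hd : HasDerivAt (fun y => (∏ i ∈ Finset.range n, (p + i)) * (a - y) ^ (-(p + n)))
        ((∏ i ∈ Finset.range n, (p + i)) * ((p + n) * (a - x) ^ (-(p + n + 1)))) x :=
      (atom_hasDeriv a (p + n) hxa).const_mul _
    rw [hd.deriv]
    rw [Finset.prod_range_succ]
    push_cast
    rw [show -(p + (n + 1)) = -(p + n + 1) by ring]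
    ring

lemma AM_atom (a p : ℝ) (ha : 1 ≤ a) (hp : 0 ≤ p) : AM (fun t => (a - t) ^ (-p)) := by
  constructor
  · intro x hx
    have hxa : (0 : ℝ) < a - x := by have := lt_of_lt_of_le hx.out ha; linarith
    have h1 : ContDiffAt ℝ (⊤ : ℕ∞) (fun t : ℝ => a - t) x := by
      exact (contDiff_const.sub contDiff_id).contDiffAt
    exact (h1.rpow_const_of_ne hxa.ne').contDiffWithinAt
  · intro n x hx
    rw [itDW n _ hx, atom_iter a p ha n hx]
    have hxa : (0 : ℝ) < a - x := by have := lt_of_lt_of_le hx.out ha; linarith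
    have hprod : 0 ≤ ∏ i ∈ Finset.range n, (p + (i : ℝ)) :=
      Finset.prod_nonneg fun i _ => by positivity
    exact mul_nonneg hprod (Real.rpow_nonneg hxa.le _)

lemma AM_G : AM Gf := by
  have h1 := AM_atom 1 1 le_rfl (by norm_num)
  have h2 := AM_atom (3/2) 1 (by norm_num) (by norm_num)
  have h3 := AM_atom 1 (3/2) le_rfl (by norm_num)
  have h4 := AM_atom 3 (1/2) (by norm_num) (by norm_num)
  have hGf : Gf = fun t => (Real.sqrt 3 / 4) *
      ((7 + 3 * (1 - t) ^ (-(1 : ℝ))) *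
        ((3 / 2 - t) ^ (-(1 : ℝ)) * ((1 - t) ^ (-(3 / 2 : ℝ)) * (3 - t) ^ (-(1 / 2 : ℝ))))) := rfl
  rw [hGf]
  exact AM_mul (AM_const (by positivity))
    (AM_mul (AM_add (AM_const (by norm_num)) (AM_mul (AM_const (by norm_num)) h1))
      (AM_mul h2 (AM_mul h3 h4)))

/-- H₂(0) = 3 - 3π/4 > 0, H₂'(0) = (3+π)/2 > 0, and
H₂''(t) = (√3/2)(7 + 3/(1-t))/((3-2t)(1-t)^{3/2}√(3-t)) > 0 on [0,1);
consequently all Taylor coefficients of H₂ at 0 are nonnegative. -/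
theorem stmt_14 :
    H₂ 0 = 3 - 3 * π / 4 ∧ (0 : ℝ) < 3 - 3 * π / 4 ∧
    deriv H₂ 0 = (3 + π) / 2 ∧ (0 : ℝ) < (3 + π) / 2 ∧
    (∀ t ∈ Ico (0 : ℝ) 1,
      deriv (deriv H₂) t =
        Real.sqrt 3 / 2 * (7 + 3 / (1 - t)) *
          (1 / ((3 - 2 * t) * (1 - t) ^ ((3 : ℝ) / 2) * Real.sqrt (3 - t))) ∧
      0 < Real.sqrt 3 / 2 * (7 + 3 / (1 - t)) *
          (1 / ((3 - 2 * t) * (1 - t) ^ ((3 : ℝ) / 2) * Real.sqrt (3 - t)))) ∧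
    (∀ m : ℕ, 0 ≤ iteratedDeriv m H₂ 0) := by
  have hs3pos : (0 : ℝ) < Real.sqrt 3 := Real.sqrt_pos.2 (by norm_num)
  have h0 : H₂ 0 = 3 - 3 * π / 4 := by
    unfold H₂
    rw [show 3 * (3 - (0 : ℝ)) / (1 - 0) = 9 by norm_num,
      show (9 : ℝ) = 3 ^ 2 by norm_num, Real.sqrt_sq (by norm_num),
      show (0 : ℝ) / (3 - 2 * 0) = 0 by norm_num, Real.arccos_zero]
    ring
  have hpilt : π < 3.15 := Real.pi_lt_d2
  have hpipos : 0 < π := Real.pi_pos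
  have hpos0 : (0 : ℝ) < 3 - 3 * π / 4 := by nlinarith
  have hEq : Set.EqOn (deriv H₂) D1 (Iio 1) := fun x hx => (hasDeriv_H₂ hx).deriv
  have hd0 : deriv H₂ 0 = (3 + π) / 2 := by
    rw [hEq (show (0:ℝ) ∈ Iio 1 by norm_num)]
    unfold D1
    rw [show (1 : ℝ) - 0 = 1 by norm_num, show (3 : ℝ) - 0 = 3 by norm_num, Real.sqrt_one,
      show (0 : ℝ) / (3 - 2 * 0) = 0 by norm_num, Real.arccos_zero]
    field_simp
    ring
  have hEq2 : Set.EqOn (deriv (deriv H₂)) Gf (Iio 1) := by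
    intro x hx
    have hev : deriv H₂ =ᶠ[nhds x] D1 :=
      Filter.eventuallyEq_of_mem (isOpen_Iio.mem_nhds hx) hEq
    rw [hev.deriv_eq, (hasDeriv_D1 hx).deriv]
  refine ⟨h0, hpos0, hd0, by positivity, ?_, ?_⟩
  · rintro t ⟨ht0, ht1⟩
    have h1 : (0 : ℝ) < 1 - t := by linarith
    have h3 : (0 : ℝ) < 3 - t := by linarith
    have h32 : (0 : ℝ) < 3 - 2 * t := by linarith
    constructor
    · rw [hEq2 ht1, Gf_eq ht1]
    · have hp1 : 0 < Real.sqrt 3 / 2 := by positivity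
      have hp2 : (0 : ℝ) < 7 + 3 / (1 - t) := by
        have : (0 : ℝ) < 3 / (1 - t) := div_pos (by norm_num) h1
        linarith
      have hp3 : (0 : ℝ) < (3 - 2 * t) * (1 - t) ^ ((3 : ℝ) / 2) * Real.sqrt (3 - t) :=
        mul_pos (mul_pos h32 (Real.rpow_pos_of_pos h1 _)) (Real.sqrt_pos.2 h3)
      exact mul_pos (mul_pos hp1 hp2) (by rw [one_div]; exact inv_pos.2 hp3)
  · intro m
    have h0U : (0 : ℝ) ∈ Iio (1 : ℝ) := by norm_num
    match m with
    | 0 => rw [iteratedDeriv_zero, h0]; linarith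
    | 1 => rw [iteratedDeriv_one, hd0]; positivity
    | (m + 2) =>
      have e1 : iteratedDeriv (m + 2) H₂ 0 = iteratedDeriv m (deriv (deriv H₂)) 0 := by
        rw [show m + 2 = m + 1 + 1 from rfl, iteratedDeriv_succ', iteratedDeriv_succ']
      rw [e1, hEq2.iteratedDeriv_of_isOpen isOpen_Iio m h0U, ← itDW m Gf h0U]
      exact AM_G.2 m 0 h0U

end
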